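/- Subdifferential inequality: for any h ≥ 0, u ∈ ℝ, f ≥ 0 and ξ ∈ ℝ, H₀(f,ξ) ≥ H₀(M(U,ξ),ξ) + (gh − u²/2 + ξu)·(f − M(U,ξ)), where gh − u²/2 + ξu = η'(U)·(1,ξ)ᵀ. -/

import Mathlib

open MeasureTheory Real

noncomputable def Mx (g h u ξ : ℝ) : ℝ := (1/(g*π)) * Real.sqrt (max 0 (2*g*h - (ξ-u)^2))
noncomputable def H0 (g f ξ : ℝ) : ℝ := ξ^2*f/2 + (g^2*π^2/6)*f^3
noncomputable def dH0 (g f ξ : ℝ) : ℝ := ξ^2/2 + (g^2*π^2/2)*f^2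

theorem subdifferential_inequality (g h u f ξ : ℝ) (hg : 0 < g) (hh : 0 ≤ h) (hf : 0 ≤ f) :
    H0 g f ξ ≥ H0 g (Mx g h u ξ) ξ + (g*h - u^2/2 + ξ*u) * (f - Mx g h u ξ) := by
  have hpi : (0:ℝ) < π := Real.pi_pos
  set A := 2*g*h - (ξ-u)^2 with hA
  set M := Mx g h u ξ with hMdef
  have hM : 0 ≤ M := by
    apply mul_nonneg
    · positivity
    · exact Real.sqrt_nonneg _
  have hsq : g^2*π^2*M^2 = max 0 A := by
    have h1 : Real.sqrt (max 0 A) ^ 2 = max 0 A := Real.sq_sqrt (le_max_left _ _)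
    have hgp : g*π ≠ 0 := by positivity
    rw [hMdef, Mx]
    field_simp
    rw [show g * 2 * h - (ξ - u) ^ 2 = A by rw [hA]; ring]
    nlinarith [h1]
  rcases le_or_gt A 0 with hAle | hApos
  · have hmax : max 0 A = 0 := max_eq_left hAle
    have hM0 : M = 0 := by
      rw [hMdef, Mx, ← hA, hmax, Real.sqrt_zero, mul_zero]
    rw [hM0]
    simp only [H0]
    nlinarith [mul_nonneg hf (neg_nonneg.mpr hAle), mul_nonneg (mul_nonneg (sq_nonneg g) (sq_nonneg π)) (mul_nonneg (mul_nonneg hf hf) hf)]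
  · have hmax : max 0 A = A := max_eq_right hApos.le
    rw [hmax] at hsq
    simp only [H0]
    nlinarith [mul_nonneg (sq_nonneg (f - M)) (by nlinarith : (0:ℝ) ≤ f + 2*M), sq_nonneg (g*π), mul_pos (mul_pos hg hg) (mul_pos hpi hpi), mul_nonneg (mul_nonneg (sq_nonneg (f-M)) hM) (sq_nonneg (g*π)), mul_nonneg (mul_nonneg (sq_nonneg (f-M)) hf) (sq_nonneg (g*π))]
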